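/- Let G = (V,E) be a finite simple undirected graph and let ℓ' be obtained from ℓ by one semi-synchronous LPA pass relative to a proper coloring with color classes D_1,…,D_k. Then f(ℓ') ≥ f(ℓ). Moreover, if during the pass some vertex v changes its label and, at the moment of its update, the neighbor-count of its new label strictly exceeds the neighbor-count of its old label (i.e., the change is not due to a tie), then f(ℓ') > f(ℓ). -/

import Mathlib

/-- The number of neighbors of `v` that carry label `l` under the labeling `ℓ`. -/
def nbrCount {V : Type*} [Fintype V] [DecidableEq V] {L : Type*} [DecidableEq L]
    (G : SimpleGraph V) [DecidableRel G.Adj] (ℓ : V → L) (v : V) (l : L) : ℕ :=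
  ((G.neighborFinset v).filter fun u => ℓ u = l).card

/-- `l` is a plurality label at `v` under `ℓ`. -/
def IsPlurality {V : Type*} [Fintype V] [DecidableEq V] {L : Type*} [DecidableEq L]
    (G : SimpleGraph V) [DecidableRel G.Adj] (ℓ : V → L) (v : V) (l : L) : Prop :=
  ∀ l', nbrCount G ℓ v l' ≤ nbrCount G ℓ v l

/-- The number of monochromatic edges of `G` under the labeling `ℓ`. -/
def monoCount {V : Type*} [Fintype V] [DecidableEq V] {L : Type*} [DecidableEq L]
    (G : SimpleGraph V) [DecidableRel G.Adj] (ℓ : V → L) : ℕ :=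
  (G.edgeFinset.filter fun e =>
      Sym2.lift ⟨fun a b => decide (ℓ a = ℓ b),
        fun a b => decide_eq_decide.mpr eq_comm⟩ e = true).card

section Aux

variable {V : Type*} [Fintype V] [DecidableEq V] {L : Type*} [DecidableEq L]
    (G : SimpleGraph V) [DecidableRel G.Adj]

/-- The monochromatic subgraph. -/
def monoGraph (ℓ : V → L) : SimpleGraph V where
  Adj u v := G.Adj u v ∧ ℓ u = ℓ v
  symm := ⟨fun u v h => ⟨h.1.symm, h.2.symm⟩⟩
  loopless := ⟨fun v h => G.loopless.irrefl v h.1⟩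

instance (ℓ : V → L) : DecidableRel (monoGraph G ℓ).Adj :=
  fun u v => inferInstanceAs (Decidable (G.Adj u v ∧ ℓ u = ℓ v))

lemma monoCount_eq_card (ℓ : V → L) :
    monoCount G ℓ = (monoGraph G ℓ).edgeFinset.card := by
  unfold monoCount
  congr 1
  ext e
  induction e using Sym2.ind with
  | _ a b =>
    rw [SimpleGraph.mem_edgeFinset, SimpleGraph.mem_edgeSet]
    simp [monoGraph, SimpleGraph.mem_edgeFinset, SimpleGraph.mem_edgeSet]

lemma degree_monoGraph (ℓ : V → L) (v : V) :
    (monoGraph G ℓ).degree v = nbrCount G ℓ v (ℓ v) := by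
  unfold SimpleGraph.degree nbrCount
  congr 1
  ext u
  simp only [SimpleGraph.mem_neighborFinset, Finset.mem_filter]
  constructor
  · rintro ⟨h1, h2⟩; exact ⟨h1, h2.symm⟩
  · rintro ⟨h1, h2⟩; exact ⟨h1, h2.symm⟩

lemma handshake (ℓ : V → L) :
    ∑ v, nbrCount G ℓ v (ℓ v) = 2 * monoCount G ℓ := by
  rw [monoCount_eq_card, ← SimpleGraph.sum_degrees_eq_twice_card_edges]
  exact Finset.sum_congr rfl fun v _ => (degree_monoGraph G ℓ v).symm

lemma nbrCount_eq_sum (ℓ : V → L) (v : V) (l : L) :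
    nbrCount G ℓ v l = ∑ u, if G.Adj v u ∧ ℓ u = l then 1 else 0 := by
  rw [nbrCount, Finset.card_filter, SimpleGraph.neighborFinset_eq_filter,
    Finset.sum_filter]
  simp [ite_and]

lemma decomp (ℓ : V → L) (S : Finset V)
    (hind : ∀ u ∈ S, ∀ w ∈ S, ¬ G.Adj u w) :
    2 * monoCount G ℓ =
      (∑ v ∈ Sᶜ, ∑ u ∈ Sᶜ, if G.Adj v u ∧ ℓ u = ℓ v then 1 else 0)
        + 2 * ∑ v ∈ S, nbrCount G ℓ v (ℓ v) := by
  set I : V → V → ℕ := fun v u => if G.Adj v u ∧ ℓ u = ℓ v then 1 else 0 with hI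
  have hIsymm : ∀ v u, I v u = I u v := by
    intro v u
    simp only [hI]
    congr 1
    rw [eq_iff_iff, G.adj_comm]
    exact and_congr_right fun _ => eq_comm
  have hI0 : ∀ v ∈ S, ∀ u ∈ S, I v u = 0 := by
    intro v hv u hu
    simp only [hI]
    exact if_neg (fun h : G.Adj v u ∧ ℓ u = ℓ v => hind v hv u hu h.1)
  have hrow : ∀ v ∈ S, ∑ u, I v u = nbrCount G ℓ v (ℓ v) := by
    intro v _
    rw [nbrCount_eq_sum]
  calc 2 * monoCount G ℓ = ∑ v, ∑ u, I v u := by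
        rw [← handshake]
        exact Finset.sum_congr rfl fun v _ => nbrCount_eq_sum G ℓ v (ℓ v)
    _ = (∑ v ∈ S, ∑ u, I v u) + ∑ v ∈ Sᶜ, ∑ u, I v u :=
        (Finset.sum_add_sum_compl S _).symm
    _ = (∑ v ∈ S, ∑ u, I v u) +
          ((∑ v ∈ Sᶜ, ∑ u ∈ S, I v u) + ∑ v ∈ Sᶜ, ∑ u ∈ Sᶜ, I v u) := by
        rw [← Finset.sum_add_distrib]
        congr 1
        exact Finset.sum_congr rfl fun v _ => (Finset.sum_add_sum_compl S _).symm
    _ = (∑ v ∈ S, ∑ u, I v u) +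
          ((∑ u ∈ S, ∑ v ∈ Sᶜ, I u v) + ∑ v ∈ Sᶜ, ∑ u ∈ Sᶜ, I v u) := by
        congr 1
        congr 1
        rw [Finset.sum_comm]
        exact Finset.sum_congr rfl fun u _ =>
          Finset.sum_congr rfl fun v _ => hIsymm v u
    _ = (∑ v ∈ S, ∑ u, I v u) +
          ((∑ u ∈ S, ∑ v, I u v) + ∑ v ∈ Sᶜ, ∑ u ∈ Sᶜ, I v u) := by
        congr 2
        refine Finset.sum_congr rfl fun u hu => ?_
        have : ∑ v ∈ S, I u v = 0 :=
          Finset.sum_eq_zero fun v hv => hI0 u hu v hv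
        rw [← Finset.sum_add_sum_compl S (I u), this, zero_add]
    _ = (∑ v ∈ Sᶜ, ∑ u ∈ Sᶜ, I v u) + 2 * ∑ v ∈ S, nbrCount G ℓ v (ℓ v) := by
        rw [Finset.sum_congr rfl hrow]
        ring

lemma stage_eq (ℓ ℓ' : V → L) (S : Finset V)
    (hind : ∀ u ∈ S, ∀ w ∈ S, ¬ G.Adj u w)
    (hfix : ∀ v ∉ S, ℓ' v = ℓ v) :
    monoCount G ℓ' + ∑ v ∈ S, nbrCount G ℓ v (ℓ v)
      = monoCount G ℓ + ∑ v ∈ S, nbrCount G ℓ v (ℓ' v) := by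
  have h1 := decomp G ℓ S hind
  have h2 := decomp G ℓ' S hind
  have hA : (∑ v ∈ Sᶜ, ∑ u ∈ Sᶜ, if G.Adj v u ∧ ℓ' u = ℓ' v then 1 else 0)
      = ∑ v ∈ Sᶜ, ∑ u ∈ Sᶜ, if G.Adj v u ∧ ℓ u = ℓ v then 1 else 0 := by
    refine Finset.sum_congr rfl fun v hv => Finset.sum_congr rfl fun u hu => ?_
    rw [hfix v (Finset.mem_compl.mp hv), hfix u (Finset.mem_compl.mp hu)]
  have hB : ∑ v ∈ S, nbrCount G ℓ' v (ℓ' v) = ∑ v ∈ S, nbrCount G ℓ v (ℓ' v) := by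
    refine Finset.sum_congr rfl fun v hv => ?_
    unfold nbrCount
    congr 1
    refine Finset.filter_congr fun u hu => ?_
    rw [SimpleGraph.mem_neighborFinset] at hu
    have huS : u ∉ S := fun huS => hind v hv u huS hu
    rw [hfix u huS]
  rw [hA, hB] at h2
  omega

lemma stage_le (ℓ ℓ' : V → L) (S : Finset V)
    (hind : ∀ u ∈ S, ∀ w ∈ S, ¬ G.Adj u w)
    (hfix : ∀ v ∉ S, ℓ' v = ℓ v)
    (hpl : ∀ v ∈ S, IsPlurality G ℓ v (ℓ' v)) :
    monoCount G ℓ ≤ monoCount G ℓ' := by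
  have h := stage_eq G ℓ ℓ' S hind hfix
  have hB : ∑ v ∈ S, nbrCount G ℓ v (ℓ v) ≤ ∑ v ∈ S, nbrCount G ℓ v (ℓ' v) :=
    Finset.sum_le_sum fun v hv => hpl v hv (ℓ v)
  omega

lemma stage_lt (ℓ ℓ' : V → L) (S : Finset V)
    (hind : ∀ u ∈ S, ∀ w ∈ S, ¬ G.Adj u w)
    (hfix : ∀ v ∉ S, ℓ' v = ℓ v)
    (hpl : ∀ v ∈ S, IsPlurality G ℓ v (ℓ' v))
    (v : V) (hv : v ∈ S)
    (hlt : nbrCount G ℓ v (ℓ v) < nbrCount G ℓ v (ℓ' v)) :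
    monoCount G ℓ < monoCount G ℓ' := by
  have h := stage_eq G ℓ ℓ' S hind hfix
  have hB : ∑ w ∈ S, nbrCount G ℓ w (ℓ w) < ∑ w ∈ S, nbrCount G ℓ w (ℓ' w) :=
    Finset.sum_lt_sum (fun w hw => hpl w hw (ℓ w)) ⟨v, hv, hlt⟩
  omega

end Aux

/-- One semi-synchronous LPA pass relative to a proper coloring with color classes
`D 0, …, D (k-1)` (stage-by-stage labelings recorded in `σ`, with `σ 0` the initial and
`σ (Fin.last k)` the final labeling) never decreases the monochromatic-edge count; if some
vertex changes its label not due to a tie (the neighbor-count of its new label at its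
update time strictly exceeds that of its old label), the count strictly increases. -/
theorem semiSync_pass_monotone
    {V : Type*} [Fintype V] [DecidableEq V] {L : Type*} [DecidableEq L]
    {k : ℕ} (G : SimpleGraph V) [DecidableRel G.Adj]
    (D : Fin k → Finset V)
    (hpart : ∀ v : V, ∃! j : Fin k, v ∈ D j)
    (hindep : ∀ j : Fin k, ∀ u ∈ D j, ∀ w ∈ D j, ¬ G.Adj u w)
    (σ : Fin (k + 1) → V → L)
    (hstage : ∀ j : Fin k,
      (∀ v ∈ D j, IsPlurality G (σ j.castSucc) v (σ j.succ v)) ∧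
      (∀ v ∉ D j, σ j.succ v = σ j.castSucc v)) :
    monoCount G (σ 0) ≤ monoCount G (σ (Fin.last k)) ∧
    ((∃ j : Fin k, ∃ v ∈ D j,
        nbrCount G (σ j.castSucc) v (σ j.castSucc v) <
          nbrCount G (σ j.castSucc) v (σ j.succ v)) →
      monoCount G (σ 0) < monoCount G (σ (Fin.last k))) := by
  have hstep : ∀ j : Fin k,
      monoCount G (σ j.castSucc) ≤ monoCount G (σ j.succ) := fun j =>
    stage_le G (σ j.castSucc) (σ j.succ) (D j) (hindep j) (hstage j).2 (hstage j).1
  have hfwd : ∀ i : Fin (k + 1), monoCount G (σ 0) ≤ monoCount G (σ i) := by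
    intro i
    induction i using Fin.induction with
    | zero => exact le_refl _
    | succ j ih => exact le_trans ih (hstep j)
  have hbwd : ∀ i : Fin (k + 1), monoCount G (σ i) ≤ monoCount G (σ (Fin.last k)) := by
    intro i
    induction i using Fin.reverseInduction with
    | last => exact le_refl _
    | cast j ih => exact le_trans (hstep j) ih
  refine ⟨hfwd _, ?_⟩
  rintro ⟨j, v, hv, hlt⟩
  have := stage_lt G (σ j.castSucc) (σ j.succ) (D j) (hindep j) (hstage j).2
    (hstage j).1 v hv hlt
  exact lt_of_le_of_lt (hfwd j.castSucc) (lt_of_lt_of_le this (hbwd j.succ))
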